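/- The VI-SLAM measurement function is invariant with respect to the reference-frame action α: for every S ∈ SE_{e₃}(3), every ξ ∈ 𝒯, and every index k, h^k(α(S, ξ)) = h^k(ξ); consequently h(α(S, ξ)) = h(ξ). -/

import Mathlib

noncomputable section
open Matrix

abbrev Mat3 := Matrix (Fin 3) (Fin 3) ℝ
abbrev Vec3 := EuclideanSpace ℝ (Fin 3)
abbrev Vec6 := EuclideanSpace ℝ (Fin 6)

def SO3 (R : Mat3) : Prop := Rᵀ * R = 1 ∧ R.det = 1

def e3 : Vec3 := WithLp.toLp 2 ![0, 0, 1]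

def mulv (M : Mat3) (v : Vec3) : Vec3 := WithLp.toLp 2 (M.mulVec v)

abbrev SE3 := Mat3 × Vec3

def SE3.mul (P Q : SE3) : SE3 := (P.1 * Q.1, P.2 + mulv P.1 Q.2)
def SE3.inv (P : SE3) : SE3 := (P.1ᵀ, -(mulv P.1ᵀ P.2))
def SE3.act (P : SE3) (p : Vec3) : Vec3 := mulv P.1 p + P.2

def SEe3 (S : SE3) : Prop := SO3 S.1 ∧ mulv S.1 e3 = e3

structure VIState (n : ℕ) where
  P : SE3
  v : Vec3
  b : Vec6
  T : SE3
  p : Fin n → Vec3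

def VIState.mem {n : ℕ} (ξ : VIState n) : Prop :=
  SO3 ξ.P.1 ∧ SO3 ξ.T.1 ∧ ∀ i, SE3.act (SE3.inv (SE3.mul ξ.P ξ.T)) (ξ.p i) ≠ 0

/-- The reference-frame action `α(S, ξ) := (S⁻¹P_B, R_Sᵀ v_B, b_B, T, (S⁻¹ p_i))`. -/
def alphaAct {n : ℕ} (S : SE3) (ξ : VIState n) : VIState n :=
  ⟨SE3.mul (SE3.inv S) ξ.P, mulv S.1ᵀ ξ.v, ξ.b, ξ.T,
    fun i => SE3.act (SE3.inv S) (ξ.p i)⟩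

/-- The `k`-th component of the measurement function: `h^k(ξ) = q_k/|q_k|`
with `q_k = (P_B T)⁻¹ p_k`. -/
def hComp {n : ℕ} (ξ : VIState n) (k : Fin n) : Vec3 :=
  ‖SE3.act (SE3.inv (SE3.mul ξ.P ξ.T)) (ξ.p k)‖⁻¹ •
    SE3.act (SE3.inv (SE3.mul ξ.P ξ.T)) (ξ.p k)

/-- The full measurement function `h(ξ) = (h¹(ξ), …, hⁿ(ξ))`. -/
def hMeas {n : ℕ} (ξ : VIState n) : Fin n → Vec3 := fun k => hComp ξ k


lemma mulv_mul' (A B : Mat3) (v : Vec3) : mulv (A*B) v = mulv A (mulv B v) := by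
  simp [mulv, ← Matrix.mulVec_mulVec]
lemma mulv_add' (A : Mat3) (v w : Vec3) : mulv A (v + w) = mulv A v + mulv A w :=
  by simp [mulv, Matrix.mulVec_add]
lemma mulv_neg' (A : Mat3) (v : Vec3) : mulv A (-v) = -(mulv A v) :=
  by simp [mulv, Matrix.mulVec_neg]

lemma key_act (S P T : SE3) (p : Vec3) (hS : S.1 * S.1ᵀ = 1) :
    SE3.act (SE3.inv (SE3.mul (SE3.mul (SE3.inv S) P) T)) (SE3.act (SE3.inv S) p)
      = SE3.act (SE3.inv (SE3.mul P T)) p := by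
  have cancel : ∀ t : Vec3, mulv S.1 (mulv S.1ᵀ t) = t := by
    intro t; simp [mulv, Matrix.mulVec_mulVec, hS, Matrix.one_mulVec]
  simp only [SE3.act, SE3.inv, SE3.mul, Matrix.transpose_mul, Matrix.transpose_transpose,
    mulv_mul', mulv_add', mulv_neg', cancel]
  abel

/-- The VI-SLAM measurement function is invariant with respect to the
reference-frame action `α`: `h^k(α(S,ξ)) = h^k(ξ)` for every `k`, and consequently
`h(α(S,ξ)) = h(ξ)`. -/
theorem measurement_invariant_under_alpha (n : ℕ) (hn : 1 ≤ n)
    (S : SE3) (ξ : VIState n) (hS : SEe3 S) (hξ : ξ.mem) :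
    (∀ k : Fin n, hComp (alphaAct S ξ) k = hComp ξ k) ∧
    hMeas (alphaAct S ξ) = hMeas ξ := by
  have h1 : S.1 * S.1ᵀ = 1 := mul_eq_one_comm.mp hS.1.1
  have hk : ∀ k : Fin n, hComp (alphaAct S ξ) k = hComp ξ k := by
    intro k
    simp only [hComp, alphaAct]
    rw [key_act S ξ.P ξ.T (ξ.p k) h1]
  exact ⟨hk, funext fun k => hk k⟩
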